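/- Let 𝒜 be an abelian category in which Ext² vanishes (hereditary), let ξ : 0 → X' → X → X'' → 0 be a short exact sequence, and let ε' : X' → Y' be any morphism and ε'' : X'' → Y'' a monomorphism. Then there exists a commutative diagram with exact rows 0 → X' → X → X'' → 0 over 0 → Y' → Y → Y'' → 0 whose vertical maps are ε', some ε : X → Y, and ε''. -/

import Mathlib

open CategoryTheory


open CategoryTheory Limits Pretriangulated

namespace StmtAux
universe w v u
variable {C : Type u} [Category.{v} C] [Abelian C]

section
variable (C) [HasDerivedCategory C]

noncomputable def nuIso :
    DerivedCategory.singleFunctor C 0 ⋙ DerivedCategory.homologyFunctor C 0 ≅ 𝟭 C :=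
  Functor.isoWhiskerRight ((SingleFunctors.evaluation _ _ (0 : ℤ)).mapIso
      (DerivedCategory.singleFunctorsPostcompQIso C)) (DerivedCategory.homologyFunctor C 0) ≪≫
    Functor.associator _ _ _ ≪≫
    Functor.isoWhiskerLeft (CochainComplex.singleFunctor C 0) (DerivedCategory.homologyFunctorFactors C 0) ≪≫
    HomologicalComplex.homologyFunctorSingleIso C (ComplexShape.up ℤ) 0

variable {C}

lemma nu_natural {A B : C} (φ : A ⟶ B) :
    (DerivedCategory.homologyFunctor C 0).map ((DerivedCategory.singleFunctor C 0).map φ) ≫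
      (nuIso C).hom.app B = (nuIso C).hom.app A ≫ φ := by
  simpa using (nuIso C).hom.naturality φ

lemma isZero_H (A : C) (n : ℤ) (hn : n ≠ 0) :
    IsZero ((DerivedCategory.homologyFunctor C n).obj
      ((DerivedCategory.singleFunctor C 0).obj A)) := by
  have e1 : (DerivedCategory.singleFunctor C 0).obj A ≅
      DerivedCategory.Q.obj ((HomologicalComplex.single C (ComplexShape.up ℤ) 0).obj A) :=
    ((SingleFunctors.evaluation _ _ (0 : ℤ)).mapIso
      (DerivedCategory.singleFunctorsPostcompQIso C)).app A
  refine IsZero.of_iso ?_ ((DerivedCategory.homologyFunctor C n).mapIso e1 ≪≫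
    (DerivedCategory.homologyFunctorFactors C n).app _)
  exact HomologicalComplex.isZero_single_obj_homology _ _ _ _ hn

end

open Abelian

variable [HasExt.{w} C]

lemma interp {Y' Z X'' Y'' Q₀ : C}
    (i : Y' ⟶ Z) (p : Z ⟶ X'') (wV : i ≫ p = 0)
    (hV : (ShortComplex.mk i p wV).ShortExact)
    (ε'' : X'' ⟶ Y'') (π : Y'' ⟶ Q₀) (wB : ε'' ≫ π = 0)
    (hB : (ShortComplex.mk ε'' π wB).ShortExact)
    (hvan : Subsingleton (Ext.{w} Q₀ Y' 2)) :
    ∃ (Y : C) (u : Z ⟶ Y) (v : Y ⟶ Y'') (w : u ≫ (v ≫ π) = 0),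
      (ShortComplex.mk u (v ≫ π) w).ShortExact ∧ u ≫ v = p ≫ ε'' := by
  obtain ⟨θ, hθ⟩ := Ext.covariant_sequence_exact₃ Q₀ hV hB.extClass rfl (Subsingleton.elim _ _)
  have hθ' : θ.comp (Ext.mk₀ p) (add_zero 1) = hB.extClass := hθ
  letI := HasDerivedCategory.standard C
  have hθhom : θ.hom ≫ ((DerivedCategory.singleFunctor C 0).map p)⟦((1 : ℕ) : ℤ)⟧' =
      hB.singleδ := by
    have h1 := Ext.hom_comp_singleFunctor_map_shift (C := C) θ p
    rw [hθ'] at h1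
    rw [h1, hB.extClass_hom]
  obtain ⟨M, uD, qD, hT⟩ := Pretriangulated.distinguished_cocone_triangle₂
    (θ.hom : (DerivedCategory.singleFunctor C 0).obj Q₀ ⟶
      ((DerivedCategory.singleFunctor C 0).obj Z)⟦(1 : ℤ)⟧)
  obtain ⟨wD, hw1, hw2⟩ := Pretriangulated.complete_distinguished_triangle_morphism₂ _ _
    hT hB.singleTriangle_distinguished ((DerivedCategory.singleFunctor C 0).map p) (𝟙 _)
    (hθhom.trans (Category.id_comp _).symm)
  change M ⟶ (DerivedCategory.singleFunctor C 0).obj Y'' at wD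
  have hw1' : uD ≫ wD = (DerivedCategory.singleFunctor C 0).map p ≫
      (DerivedCategory.singleFunctor C 0).map ε'' := hw1
  have hw2' : qD = wD ≫ (DerivedCategory.singleFunctor C 0).map π :=
    (Category.comp_id qD).symm.trans hw2
  haveI hmono : Mono ((DerivedCategory.homologyFunctor C 0).map
      (Triangle.mk uD qD θ.hom).mor₁) := by
    rw [DerivedCategory.HomologySequence.mono_homologyMap_mor₁_iff _ hT (-1) 0 (by norm_num)]
    exact (isZero_H Q₀ (-1) (by norm_num)).eq_of_src _ _
  haveI hepi : Epi ((DerivedCategory.homologyFunctor C 0).map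
      (Triangle.mk uD qD θ.hom).mor₂) := by
    rw [DerivedCategory.HomologySequence.epi_homologyMap_mor₂_iff _ hT 0 1 (by norm_num)]
    exact (isZero_H Z 1 (by norm_num)).eq_of_tgt _ _
  have hex := DerivedCategory.HomologySequence.exact₂ _ hT 0
  have hST : (ShortComplex.mk
      ((DerivedCategory.homologyFunctor C 0).map (Triangle.mk uD qD θ.hom).mor₁)
      ((DerivedCategory.homologyFunctor C 0).map (Triangle.mk uD qD θ.hom).mor₂)
      (by rw [← Functor.map_comp, comp_distTriang_mor_zero₁₂ _ hT, Functor.map_zero])).ShortExact :=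
    ⟨hex⟩
  have n1 := nu_natural (C := C) p
  have n2 := nu_natural (C := C) ε''
  have n3 := nu_natural (C := C) π
  set u : Z ⟶ (DerivedCategory.homologyFunctor C 0).obj M :=
    (nuIso C).inv.app Z ≫ (DerivedCategory.homologyFunctor C 0).map uD with hu
  set v : (DerivedCategory.homologyFunctor C 0).obj M ⟶ Y'' :=
    (DerivedCategory.homologyFunctor C 0).map wD ≫ (nuIso C).hom.app Y'' with hv
  have huv : u ≫ v = p ≫ ε'' := by
    rw [hu, hv]
    simp only [Category.assoc]
    rw [← Functor.map_comp_assoc, hw1', Functor.map_comp, Category.assoc, n2, reassoc_of% n1]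
    simp
  have hqπ : (DerivedCategory.homologyFunctor C 0).map qD ≫ (nuIso C).hom.app Q₀ = v ≫ π := by
    rw [hv, hw2', Functor.map_comp, Category.assoc, n3, Category.assoc]
  have wS1 : u ≫ (v ≫ π) = 0 := by
    rw [← Category.assoc, huv, Category.assoc, wB, Limits.comp_zero]
  refine ⟨(DerivedCategory.homologyFunctor C 0).obj M, u, v, wS1, ?_, huv⟩
  refine ShortComplex.shortExact_of_iso ?_ hST
  refine ShortComplex.isoMk ((nuIso C).app Z) (Iso.refl _) ((nuIso C).app Q₀) ?_ ?_
  · dsimp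
    rw [hu]
    exact ((nuIso C).hom_inv_id_app_assoc Z _).trans (Category.comp_id _).symm
  · dsimp
    exact (Category.id_comp _).trans hqπ.symm

end StmtAux

open CategoryTheory StmtAux Limits


/-- In a hereditary abelian category (`Ext² = 0`), any short exact sequence can be mapped
to a short exact sequence along a morphism on the left end and a monomorphism on the right
end. -/
theorem stmt_8 {C : Type u} [Category.{v} C] [Abelian C] [HasExt.{w} C]
    (hereditary : ∀ A B : C, Subsingleton (Abelian.Ext A B 2))
    {X' X X'' Y' Y'' : C} (f' : X' ⟶ X) (f'' : X ⟶ X'') (w0 : f' ≫ f'' = 0)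
    (hses : (ShortComplex.mk f' f'' w0).ShortExact)
    (ε' : X' ⟶ Y') (ε'' : X'' ⟶ Y'') [Mono ε''] :
    ∃ (Y : C) (g' : Y' ⟶ Y) (g'' : Y ⟶ Y'') (w1 : g' ≫ g'' = 0) (ε : X ⟶ Y),
      (ShortComplex.mk g' g'' w1).ShortExact ∧
      f' ≫ ε = ε' ≫ g' ∧ ε ≫ g'' = f'' ≫ ε'' := by
  haveI : Mono f' := hses.mono_f
  haveI : Epi f'' := hses.epi_g
  -- the pushout `Z` of `f'` along `ε'`
  let Z := pushout ε' f'
  let i : Y' ⟶ Z := pushout.inl ε' f'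
  let u₀ : X ⟶ Z := pushout.inr ε' f'
  let p : Z ⟶ X'' := pushout.desc 0 f'' (by rw [comp_zero, w0])
  have hip : i ≫ p = 0 := pushout.inl_desc _ _ _
  have hu₀p : u₀ ≫ p = f'' := pushout.inr_desc _ _ _
  have hcond : ε' ≫ i = f' ≫ u₀ := pushout.condition
  haveI : Epi p := by
    have : Epi (u₀ ≫ p) := by rw [hu₀p]; infer_instance
    exact epi_of_epi u₀ p
  -- `p` is a cokernel of `i`
  have isCoker : IsColimit (CokernelCofork.ofπ p hip) := by
    refine CokernelCofork.IsColimit.ofπ' p hip (fun {T} t ht => ?_)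
    have h0 : f' ≫ u₀ ≫ t = 0 := by
      rw [← Category.assoc, ← hcond, Category.assoc, ht, comp_zero]
    refine ⟨hses.gIsCokernel.desc (CokernelCofork.ofπ (u₀ ≫ t) h0), ?_⟩
    apply pushout.hom_ext
    · rw [← Category.assoc, show pushout.inl ε' f' ≫ p = 0 from hip, zero_comp, ht]
    · rw [← Category.assoc, show pushout.inr ε' f' ≫ p = f'' from hu₀p]
      exact Cofork.IsColimit.π_desc hses.gIsCokernel
  have hV : (ShortComplex.mk i p hip).ShortExact :=
    ShortComplex.ShortExact.mk' (ShortComplex.exact_of_g_is_cokernel _ isCoker)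
      (CategoryTheory.Abelian.mono_pushout_of_mono_g ε' f') (by dsimp; infer_instance)
  -- the cokernel of `ε''`
  let Q₀ := cokernel ε''
  let π : Y'' ⟶ Q₀ := cokernel.π ε''
  have hB : (ShortComplex.mk ε'' π (cokernel.condition ε'')).ShortExact :=
    ShortComplex.ShortExact.mk'
      (ShortComplex.exact_of_g_is_cokernel _ (cokernelIsCokernel ε''))
      (by dsimp; infer_instance) (by dsimp [π]; infer_instance)
  obtain ⟨Y, u, v, wS1, hS1, huv⟩ := interp i p hip hV ε'' π (cokernel.condition ε'') hB
    (hereditary Q₀ Y')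
  haveI : Mono u := hS1.mono_f
  haveI hepivπ : Epi (v ≫ π) := hS1.epi_g
  -- `v` is epi
  haveI : Epi v := by
    have h2 : ε'' ≫ cokernel.π v = 0 := by
      rw [← cancel_epi p, ← Category.assoc, ← huv, Category.assoc,
        cokernel.condition, comp_zero, comp_zero]
    have h3 : π ≫ cokernel.desc ε'' (cokernel.π v) h2 = cokernel.π v :=
      cokernel.π_desc _ _ _
    have h4 : cokernel.desc ε'' (cokernel.π v) h2 = 0 := by
      rw [← cancel_epi (v ≫ π), Category.assoc, h3, cokernel.condition, comp_zero]
    exact CategoryTheory.Abelian.epi_of_cokernel_π_eq_zero _ (by rw [← h3, h4, comp_zero])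
  -- the final short exact sequence
  have w1 : (i ≫ u) ≫ v = 0 := by
    rw [Category.assoc, huv, ← Category.assoc, hip, zero_comp]
  haveI : Mono (i ≫ u) := mono_comp i u
  have isKer : IsLimit (KernelFork.ofι (i ≫ u) w1) := by
    refine KernelFork.IsLimit.ofι' _ w1 (fun {T} t ht => ?_)
    have h1 : t ≫ v ≫ π = 0 := by rw [← Category.assoc, ht, zero_comp]
    obtain ⟨t₁, fac1⟩ := KernelFork.IsLimit.lift' hS1.fIsKernel t h1
    simp only [Fork.ι_ofι] at fac1
    dsimp at fac1
    have h5 : t₁ ≫ p = 0 := by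
      rw [← cancel_mono ε'', zero_comp, Category.assoc, ← huv, ← Category.assoc, fac1, ht]
    obtain ⟨t₀, fac0⟩ := KernelFork.IsLimit.lift' hV.fIsKernel t₁ h5
    simp only [Fork.ι_ofι] at fac0
    dsimp at fac0
    refine ⟨t₀, ?_⟩
    rw [← Category.assoc, fac0, fac1]
  have hfinal : (ShortComplex.mk (i ≫ u) v w1).ShortExact :=
    ShortComplex.ShortExact.mk' (ShortComplex.exact_of_f_is_kernel _ isKer)
      (by dsimp; infer_instance) (by dsimp; infer_instance)
  refine ⟨Y, i ≫ u, v, w1, u₀ ≫ u, hfinal, ?_, ?_⟩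
  · rw [← Category.assoc, ← hcond, Category.assoc]
  · rw [Category.assoc, huv, ← Category.assoc, hu₀p]
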